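/- Let 𝒮 be an essentially small triangulated category and G an object of 𝒮 such that there exists e ∈ ℕ with the property that every X ∈ 𝒮 satisfying Hom(X, G[j]) = 0 for all j ≤ -1 belongs to ⟨G⟩^{(-∞,e]} (i.e. fd(𝒮^op, G^op) < ∞). Then for every bounded t-structure (𝒮^{≤0}, 𝒮^{≥0}) on 𝒮 there exist r, s ∈ ℕ with ⟨G⟩^{(-∞,-r]} ⊆ 𝒮^{≤0} ⊆ ⟨G⟩^{(-∞,s]}. -/

import Mathlib

open CategoryTheory Limits Pretriangulated

universe v u

namespace Paper

variable (C : Type u) [Category.{v} C] [HasZeroObject C] [HasShift C ℤ]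
  [Preadditive C] [∀ n : ℤ, (shiftFunctor C n).Additive] [Pretriangulated C]

/-- `Z` is a direct sum of `X` and `Y`. -/
def IsDirSum {C : Type u} [Category.{v} C] [Preadditive C] (Z X Y : C) : Prop :=
  ∃ (i₁ : X ⟶ Z) (i₂ : Y ⟶ Z) (p₁ : Z ⟶ X) (p₂ : Z ⟶ Y),
    i₁ ≫ p₁ = 𝟙 X ∧ i₂ ≫ p₂ = 𝟙 Y ∧ i₁ ≫ p₂ = 0 ∧ i₂ ≫ p₁ = 0 ∧
    p₁ ≫ i₁ + p₂ ≫ i₂ = 𝟙 Z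

/-- The extension `A * B` of two classes of objects. -/
def star (A B : Set C) : Set C :=
  {Z | ∃ (X Y : C) (f : X ⟶ Z) (g : Z ⟶ Y) (h : Y ⟶ (X⟦(1:ℤ)⟧ : C)),
      X ∈ A ∧ Y ∈ B ∧ Triangle.mk f g h ∈ distTriang C}

/-- Closure of a class of objects under finite direct sums and isomorphism. -/
inductive addClos (A : Set C) : C → Prop
  | of {X Y : C} (e : X ≅ Y) (hY : Y ∈ A) : addClos A X
  | zero {X : C} (hX : IsZero X) : addClos A X
  | dirSum {Z X Y : C} (hX : addClos A X) (hY : addClos A Y) (h : IsDirSum Z X Y) :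
      addClos A Z

/-- `coprodN A n` is `coprod_n (A)`; by convention `coprodN A 0` consists of zero objects. -/
def coprodN (A : Set C) : ℕ → Set C
  | 0 => {X | IsZero X}
  | 1 => setOf (addClos C A)
  | (n+2) => star C (setOf (addClos C A)) (coprodN A (n+1))

/-- Direct summands of objects in `A`. -/
def smd (A : Set C) : Set C := {X | ∃ (Z Y : C), Z ∈ A ∧ IsDirSum Z X Y}

/-- The class `G[I] = {G[-i] : i ∈ I}` (up to isomorphism). -/
def shiftsOf (G : C) (I : Set ℤ) : Set C :=
  {X | ∃ i ∈ I, Nonempty (X ≅ (G⟦(-i : ℤ)⟧ : C))}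

/-- `⟨G⟩ₙ^I := smd (coprodₙ (G[I]))`. -/
def genN (G : C) (I : Set ℤ) (n : ℕ) : Set C := smd C (coprodN C (shiftsOf C G I) n)

/-- `⟨G⟩^I := ⋃_{n > 0} ⟨G⟩ₙ^I`. -/
def gen (G : C) (I : Set ℤ) : Set C := {X | ∃ n : ℕ, X ∈ genN C G I (n+1)}

/-- The right orthogonal `G[I]^⊥`. -/
def rPerpShifts (G : C) (I : Set ℤ) : Set C :=
  {Y | ∀ i ∈ I, ∀ f : (G⟦(-i : ℤ)⟧ : C) ⟶ Y, f = 0}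

/-- `fd(𝒮, G) ≤ m` : `G(-∞,-1]^⊥ ⊆ ⟨G⟩^{[0,∞)}[m] = ⟨G⟩^{[-m,∞)}`. -/
def fdLE (G : C) (m : ℤ) : Prop :=
  ∀ X ∈ rPerpShifts C G (Set.Iic (-1)), X ∈ gen C G (Set.Ici (-m))

/-- `fd(𝒮ᵒᵖ, Gᵒᵖ) ≤ m`, expressed inside `𝒮`. -/
def fdOpLE (G : C) (m : ℤ) : Prop :=
  ∀ X : C, (∀ j : ℤ, j ≤ -1 → ∀ f : X ⟶ (G⟦j⟧ : C), f = 0) →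
    X ∈ gen C G (Set.Iic m)

/-- A t-structure on `C`, given by its aisle `le = 𝒮^{≤0}` and coaisle `ge = 𝒮^{≥0}`. -/
structure TStructure where
  le : Set C
  ge : Set C
  le_iso : ∀ ⦃X Y : C⦄, (X ≅ Y) → X ∈ le → Y ∈ le
  ge_iso : ∀ ⦃X Y : C⦄, (X ≅ Y) → X ∈ ge → Y ∈ ge
  le_shift : ∀ X ∈ le, (X⟦(1:ℤ)⟧ : C) ∈ le
  ge_shift : ∀ X ∈ ge, (X⟦(-1:ℤ)⟧ : C) ∈ ge
  hom_zero : ∀ X ∈ le, ∀ Y ∈ ge, ∀ f : (X⟦(1:ℤ)⟧ : C) ⟶ Y, f = 0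
  triangle : ∀ X : C, ∃ (A B : C) (_ : A ∈ le) (_ : B ∈ ge)
      (f : ((A⟦(1:ℤ)⟧ : C)) ⟶ X) (g : X ⟶ B) (h : B ⟶ ((A⟦(1:ℤ)⟧ : C)⟦(1:ℤ)⟧)),
      Triangle.mk f g h ∈ distTriang C

variable {C}

/-- bounded above: `𝒮 = ⋃ₙ 𝒮^{≤n}`. -/
def TStructure.BoundedAbove (T : TStructure C) : Prop :=
  ∀ X : C, ∃ n : ℕ, (X⟦(n : ℤ)⟧ : C) ∈ T.le

/-- bounded below: `𝒮 = ⋃ₙ 𝒮^{≥-n}`. -/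
def TStructure.BoundedBelow (T : TStructure C) : Prop :=
  ∀ X : C, ∃ n : ℕ, (X⟦(-(n : ℤ))⟧ : C) ∈ T.ge

/-- bounded t-structure. -/
def TStructure.Bounded (T : TStructure C) : Prop :=
  T.BoundedAbove ∧ T.BoundedBelow

/-- A good metric on `C`. -/
structure IsGoodMetric (M : ℕ → Set C) : Prop where
  zero_mem : ∀ n : ℕ, ∀ X : C, IsZero X → X ∈ M n
  ext : ∀ n : ℕ, star C (M n) (M n) ⊆ M n
  shift_neg : ∀ n : ℕ, ∀ X ∈ M (n+1), (X⟦(-1:ℤ)⟧ : C) ∈ M n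
  mono : ∀ n : ℕ, ∀ X ∈ M (n+1), X ∈ M n
  shift_pos : ∀ n : ℕ, ∀ X ∈ M (n+1), (X⟦(1:ℤ)⟧ : C) ∈ M n

variable (C)

/-- A chain of morphisms indexed by `ℕ`. -/
structure Chain where
  X : ℕ → C
  f : ∀ n : ℕ, X n ⟶ X (n+1)

/-- `Z` is a cone of `f : A ⟶ B`. -/
def IsConeOf {A B : C} (Z : C) (f : A ⟶ B) : Prop :=
  ∃ (g : B ⟶ Z) (h : Z ⟶ (A⟦(1:ℤ)⟧ : C)), Triangle.mk f g h ∈ distTriang C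

variable {C}

/-- Cauchy sequence with respect to a (good) metric `M`. -/
def Chain.IsCauchy (c : Chain C) (M : ℕ → Set C) : Prop :=
  ∀ i : ℕ, ∃ N : ℕ, ∀ j : ℕ, N ≤ j → ∃ Z : C, IsConeOf C Z (c.f j) ∧ Z ∈ M i



section Aux

variable {C : Type u} [Category.{v} C] [HasZeroObject C] [HasShift C ℤ]
  [Preadditive C] [∀ n : ℤ, (shiftFunctor C n).Additive] [Pretriangulated C]

/-- Membership in the left orthogonal of the coaisle. -/
def memL (T : TStructure C) (X : C) : Prop :=
  ∀ B ∈ T.ge, ∀ f : (X⟦(1:ℤ)⟧ : C) ⟶ B, f = 0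

lemma memL_iso {T : TStructure C} {X Y : C} (e : X ≅ Y) (h : memL T Y) : memL T X := by
  intro B hB f
  have h0 : (shiftFunctor C (1:ℤ)).map e.inv ≫ f = 0 := h B hB _
  have hf : f = (shiftFunctor C (1:ℤ)).map e.hom ≫ ((shiftFunctor C (1:ℤ)).map e.inv ≫ f) := by
    rw [← Category.assoc, ← Functor.map_comp, e.hom_inv_id, CategoryTheory.Functor.map_id, Category.id_comp]
  rw [hf, h0, comp_zero]

lemma memL_zero {T : TStructure C} {X : C} (hX : IsZero X) : memL T X := by
  intro B hB f
  exact ((shiftFunctor C (1:ℤ)).map_isZero hX).eq_of_src f 0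

lemma memL_dirSum {T : TStructure C} {Z X Y : C} (h : IsDirSum Z X Y)
    (hX : memL T X) (hY : memL T Y) : memL T Z := by
  intro B hB f
  obtain ⟨i₁, i₂, p₁, p₂, _, _, _, _, hsum⟩ := h
  have e1 : (shiftFunctor C (1:ℤ)).map i₁ ≫ f = 0 := hX B hB _
  have e2 : (shiftFunctor C (1:ℤ)).map i₂ ≫ f = 0 := hY B hB _
  calc f = 𝟙 _ ≫ f := (Category.id_comp f).symm
    _ = (shiftFunctor C (1:ℤ)).map (p₁ ≫ i₁ + p₂ ≫ i₂) ≫ f := by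
      rw [hsum, CategoryTheory.Functor.map_id]
    _ = (shiftFunctor C (1:ℤ)).map p₁ ≫ ((shiftFunctor C (1:ℤ)).map i₁ ≫ f)
        + (shiftFunctor C (1:ℤ)).map p₂ ≫ ((shiftFunctor C (1:ℤ)).map i₂ ≫ f) := by
      rw [Functor.map_add, Preadditive.add_comp, Functor.map_comp, Functor.map_comp,
        Category.assoc, Category.assoc]
    _ = 0 := by rw [e1, e2, comp_zero, comp_zero, add_zero]

lemma memL_summand {T : TStructure C} {Z X Y : C} (h : IsDirSum Z X Y) (hZ : memL T Z) :
    memL T X := by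
  intro B hB f
  obtain ⟨i₁, i₂, p₁, p₂, h1, _, _, _, _⟩ := h
  have e1 : (shiftFunctor C (1:ℤ)).map p₁ ≫ f = 0 := hZ B hB _
  calc f = 𝟙 _ ≫ f := (Category.id_comp f).symm
    _ = (shiftFunctor C (1:ℤ)).map i₁ ≫ ((shiftFunctor C (1:ℤ)).map p₁ ≫ f) := by
      rw [← Category.assoc, ← Functor.map_comp, h1, CategoryTheory.Functor.map_id]
    _ = 0 := by rw [e1, comp_zero]

lemma memL_ext {T : TStructure C} {X Z Y : C} {f : X ⟶ Z} {g : Z ⟶ Y}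
    {h : Y ⟶ (X⟦(1:ℤ)⟧ : C)} (hdist : Triangle.mk f g h ∈ distTriang C)
    (hX : memL T X) (hY : memL T Y) : memL T Z := by
  intro B hB φ
  have hT2 := rot_of_distTriang _ (rot_of_distTriang _ hdist)
  obtain ⟨ψ, hψ⟩ := Triangle.yoneda_exact₃ _ hT2 (show ((Triangle.mk f g h).rotate.rotate).obj₃ ⟶ B from φ) (by
    have h0 : (shiftFunctor C (1:ℤ)).map f ≫ φ = 0 := hX B hB _
    dsimp [Triangle.rotate]
    change (-(shiftFunctor C (1:ℤ)).map f) ≫ φ = 0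
    rw [Preadditive.neg_comp]
    change -((shiftFunctor C (1:ℤ)).map f ≫ φ) = 0
    rw [h0, neg_zero])
  have hψ0 : ψ = 0 := hY B hB ψ
  rw [hψ0, comp_zero] at hψ
  exact hψ

lemma TStructure.mem_le_iff (T : TStructure C) (X : C) : X ∈ T.le ↔ memL T X := by
  constructor
  · intro hX B hB f
    exact T.hom_zero X hX B hB f
  · intro hX
    obtain ⟨A, B, hA, hB, f, g, h, hdist⟩ := T.triangle ((X⟦(1:ℤ)⟧ : C))
    have hg : g = 0 := hX B hB g
    obtain ⟨p, hp⟩ := Triangle.yoneda_exact₃ _ hdist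
      (show (Triangle.mk f g h).obj₃ ⟶ B from 𝟙 B)
      (by dsimp; rw [hg]; exact zero_comp)
    have hp0 : p = 0 := T.hom_zero _ (T.le_shift A hA) B hB p
    have hBzero : IsZero B := by
      rw [IsZero.iff_id_eq_zero]
      have : (𝟙 B : B ⟶ B) = h ≫ p := hp
      rw [this, hp0]; exact comp_zero
    have hiso : IsIso ((Triangle.mk f g h).mor₁) :=
      (Triangle.isZero₃_iff_isIso₁ _ hdist).1 hBzero
    exact T.le_iso ((shiftFunctor C (1:ℤ)).preimageIso (@asIso _ _ _ _ ((Triangle.mk f g h).mor₁) hiso)) hA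

lemma memL_addClos {T : TStructure C} {A : Set C} (hA : ∀ X ∈ A, memL T X) {X : C}
    (h : addClos C A X) : memL T X := by
  induction h with
  | of e hY => exact memL_iso e (hA _ hY)
  | zero hX => exact memL_zero hX
  | dirSum hX hY hsum ihX ihY => exact memL_dirSum hsum ihX ihY

lemma memL_coprodN {T : TStructure C} {A : Set C} (hA : ∀ X ∈ A, memL T X) :
    ∀ n, ∀ X ∈ coprodN C A n, memL T X := by
  intro n
  induction n with
  | zero => exact fun X hX => memL_zero hX
  | succ n ih =>
    cases n with
    | zero => exact fun X hX => memL_addClos hA hX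
    | succ k =>
      rintro X ⟨X₁, Y₁, f, g, h, h1, h2, hdist⟩
      exact memL_ext hdist (memL_addClos hA h1) (ih Y₁ h2)

lemma memL_gen {T : TStructure C} {G : C} {I : Set ℤ}
    (hG : ∀ X ∈ shiftsOf C G I, memL T X) {X : C} (hX : X ∈ gen C G I) : memL T X := by
  obtain ⟨n, Z, Y, hZ, hsum⟩ := hX
  exact memL_summand hsum (memL_coprodN hG (n+1) Z hZ)

lemma IsDirSum.map {Z X Y : C} (F : C ⥤ C) [F.Additive] (h : IsDirSum Z X Y) :
    IsDirSum (F.obj Z) (F.obj X) (F.obj Y) := by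
  obtain ⟨i₁, i₂, p₁, p₂, h1, h2, h3, h4, h5⟩ := h
  refine ⟨F.map i₁, F.map i₂, F.map p₁, F.map p₂, ?_, ?_, ?_, ?_, ?_⟩
  · rw [← F.map_comp, h1, F.map_id]
  · rw [← F.map_comp, h2, F.map_id]
  · rw [← F.map_comp, h3, F.map_zero]
  · rw [← F.map_comp, h4, F.map_zero]
  · rw [← F.map_comp, ← F.map_comp, ← F.map_add, h5, F.map_id]

lemma IsDirSum.of_iso {Z Z' X Y : C} (e : Z ≅ Z') (h : IsDirSum Z X Y) :
    IsDirSum Z' X Y := by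
  obtain ⟨i₁, i₂, p₁, p₂, h1, h2, h3, h4, h5⟩ := h
  refine ⟨i₁ ≫ e.hom, i₂ ≫ e.hom, e.inv ≫ p₁, e.inv ≫ p₂, ?_, ?_, ?_, ?_, ?_⟩
  · simp [h1]
  · simp [h2]
  · simp [h3]
  · simp [h4]
  · have h6 : e.inv ≫ (p₁ ≫ i₁ + p₂ ≫ i₂) ≫ e.hom = 𝟙 Z' := by
      rw [h5, Category.id_comp, e.inv_hom_id]
    rw [← h6]
    simp [Preadditive.comp_add, Preadditive.add_comp]

lemma IsDirSum.iso_left {Z X X' Y : C} (e : X ≅ X') (h : IsDirSum Z X Y) :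
    IsDirSum Z X' Y := by
  obtain ⟨i₁, i₂, p₁, p₂, h1, h2, h3, h4, h5⟩ := h
  refine ⟨e.inv ≫ i₁, i₂, p₁ ≫ e.hom, p₂, ?_, h2, ?_, ?_, ?_⟩
  · simp [reassoc_of% h1]
  · simp [h3]
  · simp [reassoc_of% h4]
  · simp [h5]

lemma addClos_iso {A : Set C} {X Y : C} (e : X ≅ Y) (h : addClos C A Y) :
    addClos C A X := by
  cases h with
  | of e' hY => exact addClos.of (e ≪≫ e') hY
  | zero hZ => exact addClos.zero (hZ.of_iso e)
  | dirSum hX hY hsum => exact addClos.dirSum hX hY (hsum.of_iso e.symm)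

lemma addClos_shift {A A' : Set C} (n : ℤ) (hAA' : ∀ Y ∈ A, addClos C A' ((Y⟦n⟧ : C)))
    {X : C} (h : addClos C A X) : addClos C A' ((X⟦n⟧ : C)) := by
  induction h with
  | of e hY => exact addClos_iso ((shiftFunctor C n).mapIso e) (hAA' _ hY)
  | zero hX => exact addClos.zero ((shiftFunctor C n).map_isZero hX)
  | dirSum hX hY hsum ihX ihY => exact addClos.dirSum ihX ihY (hsum.map (shiftFunctor C n))

lemma star_shift (n : ℤ) {A B A' B' : Set C}
    (hA : ∀ X ∈ A, (X⟦n⟧ : C) ∈ A') (hB : ∀ Y ∈ B, (Y⟦n⟧ : C) ∈ B')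
    {Z : C} (hZ : Z ∈ star C A B) : (Z⟦n⟧ : C) ∈ star C A' B' := by
  obtain ⟨X, Y, f, g, h, hX, hY, hdist⟩ := hZ
  have hd := Pretriangulated.Triangle.shift_distinguished (Triangle.mk f g h) hdist n
  exact ⟨(X⟦n⟧ : C), (Y⟦n⟧ : C), _, _, _, hA X hX, hB Y hY, hd⟩

lemma coprodN_shift (n : ℤ) {A A' : Set C}
    (hAA' : ∀ Y ∈ A, addClos C A' ((Y⟦n⟧ : C))) :
    ∀ k, ∀ X ∈ coprodN C A (k+1), (X⟦n⟧ : C) ∈ coprodN C A' (k+1) := by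
  intro k
  induction k with
  | zero => exact fun X hX => addClos_shift n hAA' hX
  | succ k ih =>
    intro X hX
    exact star_shift n (fun W hW => addClos_shift n hAA' hW) (fun W hW => ih W hW) hX

lemma gen_shift_Iic {G : C} (a : ℤ) (n : ℤ) {X : C} (hX : X ∈ gen C G (Set.Iic a)) :
    (X⟦n⟧ : C) ∈ gen C G (Set.Iic (a - n)) := by
  obtain ⟨k, Z, Y, hZ, hsum⟩ := hX
  have hshifts : ∀ W ∈ shiftsOf C G (Set.Iic a),
      addClos C (shiftsOf C G (Set.Iic (a - n))) ((W⟦n⟧ : C)) := by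
    rintro W ⟨i, hi, ⟨e⟩⟩
    refine addClos.of (Iso.refl _) ⟨i - n, sub_le_sub_right hi n,
      ⟨(shiftFunctor C n).mapIso e ≪≫
        ((shiftFunctorAdd' C (-i) n (-(i - n)) (by ring)).app G).symm⟩⟩
  exact ⟨k, (Z⟦n⟧ : C), (Y⟦n⟧ : C), coprodN_shift n hshifts k Z hZ,
    hsum.map (shiftFunctor C n)⟩

lemma gen_iso {G : C} {I : Set ℤ} {X Y : C} (e : X ≅ Y) (hY : Y ∈ gen C G I) :
    X ∈ gen C G I := by
  obtain ⟨k, Z, W, hZ, hsum⟩ := hY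
  exact ⟨k, Z, W, hZ, hsum.iso_left e.symm⟩

end Aux

/-- If `fd(𝒮ᵒᵖ, Gᵒᵖ) ≤ e` (every `X` with `Hom(X, G[j]) = 0` for all
`j ≤ -1` lies in `⟨G⟩^{(-∞,e]}`), then the aisle of any bounded t-structure on `𝒮` is
squeezed between `⟨G⟩^{(-∞,-r]}` and `⟨G⟩^{(-∞,s]}` for some `r, s ∈ ℕ`. -/
theorem aisle_squeezed_of_fdOp_finite
    (C : Type u) [Category.{v} C] [HasZeroObject C] [HasShift C ℤ]
    [Preadditive C] [∀ n : ℤ, (shiftFunctor C n).Additive] [Pretriangulated C]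
    (G : C) (e : ℕ) (hfdop : fdOpLE C G (e : ℤ))
    (T : TStructure C) (hT : T.Bounded) :
    ∃ r s : ℕ, gen C G (Set.Iic (-(r : ℤ))) ⊆ T.le ∧ T.le ⊆ gen C G (Set.Iic (s : ℤ)) := by
  obtain ⟨hAbove, hBelow⟩ := hT
  obtain ⟨r, hr⟩ := hAbove G
  obtain ⟨m, hm⟩ := hBelow G
  -- G⟦t⟧ ∈ T.le for t ≥ r
  have key_le : ∀ k : ℕ, (G⟦((r : ℤ) + k)⟧ : C) ∈ T.le := by
    intro k
    induction k with
    | zero =>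
      rw [show ((r : ℤ) + ((0 : ℕ) : ℤ)) = (r : ℤ) by omega]
      exact hr
    | succ k ih =>
      have e : ((G⟦(r : ℤ) + k⟧ : C)⟦(1:ℤ)⟧ : C) ≅ (G⟦(r : ℤ) + ((k + 1 : ℕ) : ℤ)⟧ : C) :=
        ((shiftFunctorAdd' C ((r : ℤ) + k) 1 ((r : ℤ) + ((k + 1 : ℕ) : ℤ))
          (by push_cast; ring)).app G).symm
      exact T.le_iso e (T.le_shift _ ih)
  have hle : ∀ t : ℤ, (r : ℤ) ≤ t → (G⟦t⟧ : C) ∈ T.le := by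
    intro t ht
    have h0 := key_le (t - r).toNat
    rwa [show ((r : ℤ) + (((t - r).toNat : ℕ) : ℤ)) = t by omega] at h0
  -- G⟦t⟧ ∈ T.ge for t ≤ -m
  have key_ge : ∀ k : ℕ, (G⟦(-(m : ℤ) - k)⟧ : C) ∈ T.ge := by
    intro k
    induction k with
    | zero =>
      rw [show (-(m : ℤ) - ((0 : ℕ) : ℤ)) = -(m : ℤ) by omega]
      exact hm
    | succ k ih =>
      have e : ((G⟦-(m : ℤ) - k⟧ : C)⟦(-1:ℤ)⟧ : C) ≅ (G⟦-(m : ℤ) - ((k + 1 : ℕ) : ℤ)⟧ : C) :=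
        ((shiftFunctorAdd' C (-(m : ℤ) - k) (-1) (-(m : ℤ) - ((k + 1 : ℕ) : ℤ))
          (by push_cast; ring)).app G).symm
      exact T.ge_iso e (T.ge_shift _ ih)
  have hge : ∀ t : ℤ, t ≤ -(m : ℤ) → (G⟦t⟧ : C) ∈ T.ge := by
    intro t ht
    have h0 := key_ge (-(m : ℤ) - t).toNat
    rwa [show (-(m : ℤ) - (((-(m : ℤ) - t).toNat : ℕ) : ℤ)) = t by omega] at h0
  refine ⟨r, e + m, ?_, ?_⟩
  · -- first inclusion
    intro X hX
    rw [T.mem_le_iff]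
    refine memL_gen ?_ hX
    rintro W ⟨i, hi, ⟨e'⟩⟩
    refine memL_iso e' ?_
    have hGi : (G⟦(-i : ℤ)⟧ : C) ∈ T.le := by
      refine hle (-i) ?_
      have := Set.mem_Iic.mp hi
      omega
    exact (T.mem_le_iff _).1 hGi
  · -- second inclusion
    intro X hX
    have h1 : ∀ j : ℤ, j ≤ -1 → ∀ f : ((X⟦(m : ℤ)⟧ : C)) ⟶ (G⟦j⟧ : C), f = 0 := by
      intro j hj f
      have hge' : (G⟦j + 1 - (m : ℤ)⟧ : C) ∈ T.ge := hge _ (by omega)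
      have iso₁ : (X⟦(1:ℤ)⟧ : C) ≅ (((X⟦(m : ℤ)⟧ : C))⟦(1:ℤ) - (m : ℤ)⟧ : C) :=
        (shiftFunctorAdd' C (m : ℤ) ((1:ℤ) - (m : ℤ)) 1 (by ring)).app X
      have iso₂ : (((G⟦j⟧ : C))⟦(1:ℤ) - (m : ℤ)⟧ : C) ≅ (G⟦j + 1 - (m : ℤ)⟧ : C) :=
        ((shiftFunctorAdd' C j ((1:ℤ) - (m : ℤ)) (j + 1 - (m : ℤ)) (by ring)).app G).symm
      have h0 : iso₁.hom ≫ (shiftFunctor C ((1:ℤ) - (m : ℤ))).map f ≫ iso₂.hom = 0 :=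
        T.hom_zero X hX _ hge' _
      have h2 : (shiftFunctor C ((1:ℤ) - (m : ℤ))).map f = 0 := by
        have h3 := congrArg (fun g => iso₁.inv ≫ g ≫ iso₂.inv) h0
        simpa using h3
      refine (shiftFunctor C ((1:ℤ) - (m : ℤ))).map_injective ?_
      rw [h2, Functor.map_zero]
    have h2 := hfdop _ h1
    have h3 := gen_shift_Iic (e : ℤ) (-(m : ℤ)) h2
    rw [show ((e : ℤ) - -(m : ℤ)) = (((e + m : ℕ) : ℤ)) by push_cast; ring] at h3
    have isoX : X ≅ (((X⟦(m : ℤ)⟧ : C))⟦-(m : ℤ)⟧ : C) :=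
      ((shiftFunctorZero C ℤ).app X).symm ≪≫
        (shiftFunctorAdd' C (m : ℤ) (-(m : ℤ)) 0 (by ring)).app X
    exact gen_iso isoX h3

end Paper
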